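/- If ξ is a real number and p, q are integers with q > 0, gcd(p,q) = 1, and |ξ - p/q| < 1/(2q²), then p/q is a convergent of the continued fraction expansion of ξ. -/
import Mathlib

theorem legendre_criterion_convergent (ξ : ℝ) (p q : ℤ) (hq : 0 < q)
    (hcop : Int.gcd p q = 1)
    (h : |ξ - (p : ℝ) / q| < 1 / (2 * (q : ℝ) ^ 2)) :
    ∃ n : ℕ, (p : ℝ) / q = (GenContFract.of ξ).convs n := by
  have hq0 : q.toNat ≠ 0 := by omega
  have hc : p.natAbs.Coprime q.toNat := by
    have : q.natAbs = q.toNat := by omega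
    simpa [Nat.Coprime, Int.gcd, this] using hcop
  set r : ℚ := ⟨p, q.toNat, hq0, hc⟩ with hr
  have hrden : (r.den : ℤ) = q := by simp [hr]; omega
  have hrcast : (r : ℝ) = (p : ℝ) / q := by
    rw [Rat.cast_def]
    have h1 : (r.num : ℝ) = (p : ℝ) := by simp [hr]
    have h2 : ((r.den : ℕ) : ℝ) = (q : ℝ) := by exact_mod_cast hrden
    rw [h1, h2]
  have h' : |ξ - (r : ℝ)| < 1 / (2 * (r.den : ℝ) ^ 2) := by
    rw [hrcast]
    have : ((r.den : ℝ)) = (q : ℝ) := by exact_mod_cast hrden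
    rw [this]; exact h
  obtain ⟨n, hn⟩ := Real.exists_convs_eq_rat h'
  exact ⟨n, by rw [← hrcast, hn]⟩
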